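/- If the differential ring homomorphism φ : K ⊗_C E → K ⊗_C R, φ(a ⊗ d) = (a ⊗ 1)·d, is an isomorphism, then the differential ring K ⊗_C R is almost constant; that is, the map sending a radical ideal 𝔞 of E to the radical differential ideal of K ⊗_C R it generates is a bijection between the set of radical ideals of E and the set of radical differential ideals of K ⊗_C R (radical ideals stable under all the extended derivations). -/

import Mathlib

set_option synthInstance.maxHeartbeats 1000000
set_option maxHeartbeats 1000000

open TensorProduct

section Preliminaries

variable (C K R : Type) [Field C] [Field K] [Algebra C K] [CommRing R] [Algebra C R]

/-- The map `δ(x ⊗ y) = δK x ⊗ y + x ⊗ δR y` on `K ⊗[C] R`, as a `C`-linear map. -/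
noncomputable def tensorDerMap (dK : Derivation C K K) (dR : Derivation C R R) :
    K ⊗[C] R →ₗ[C] K ⊗[C] R :=
  LinearMap.rTensor R dK.toLinearMap + LinearMap.lTensor K dR.toLinearMap

lemma tensorDerMap_tmul (dK : Derivation C K K) (dR : Derivation C R R) (a : K) (b : R) :
    tensorDerMap C K R dK dR (a ⊗ₜ b) = dK a ⊗ₜ b + a ⊗ₜ dR b := by
  simp [tensorDerMap]

lemma tensorDerMap_leibniz (dK : Derivation C K K) (dR : Derivation C R R) (x y : K ⊗[C] R) :
    tensorDerMap C K R dK dR (x * y)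
      = x * tensorDerMap C K R dK dR y + y * tensorDerMap C K R dK dR x := by
  induction x using TensorProduct.induction_on with
  | zero => simp
  | tmul a b =>
    induction y using TensorProduct.induction_on with
    | zero => simp
    | tmul c d =>
      simp only [Algebra.TensorProduct.tmul_mul_tmul, tensorDerMap_tmul, Derivation.leibniz,
        smul_eq_mul, TensorProduct.add_tmul, TensorProduct.tmul_add, mul_add]
      rw [mul_comm d b, mul_comm c a]
      ring_nf
    | add y1 y2 h1 h2 =>
      simp only [mul_add, map_add, h1, h2]
      ring_nf
  | add x1 x2 h1 h2 =>
    simp only [add_mul, map_add, h1, h2]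
    ring_nf

/-- The extension of the derivations `dK` and `dR` to `K ⊗[C] R`,
`δ(x ⊗ y) = δ(x) ⊗ y + x ⊗ δ(y)`, as a bona fide derivation. -/
noncomputable def tensorDer (dK : Derivation C K K) (dR : Derivation C R R) :
    Derivation C (K ⊗[C] R) (K ⊗[C] R) :=
  Derivation.mk' (tensorDerMap C K R dK dR) (by
    intro a b
    simpa [smul_eq_mul] using tensorDerMap_leibniz C K R dK dR a b)

end Preliminaries

section Constants

variable (C : Type) [Field C] (A : Type) [CommRing A] [Algebra C A]

/-- The subring (subalgebra) of constants of a differential ring. -/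
def constantsSubalgebra (ι : Type) (D : ι → Derivation C A A) : Subalgebra C A where
  carrier := {x | ∀ i, D i x = 0}
  mul_mem' := by intro a b ha hb i; simp [Derivation.leibniz, ha i, hb i]
  add_mem' := by intro a b ha hb i; simp [ha i, hb i]
  algebraMap_mem' := by intro c i; simp

end Constants

section LeveltMap

variable (C K R : Type) [Field C] [Field K] [Algebra C K] [CommRing R] [Algebra C R]
variable (ι : Type) (dK : ι → Derivation C K K) (dR : ι → Derivation C R R)

/-- `E`, the differential subring of constants of `K ⊗[C] R`. -/
noncomputable def constantsE : Subalgebra C (K ⊗[C] R) :=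
  constantsSubalgebra C (K ⊗[C] R) ι (fun i => tensorDer C K R (dK i) (dR i))

/-- Levelt's differential ring homomorphism `φ : K ⊗[C] E → K ⊗[C] R`,
`φ(a ⊗ d) = (a ⊗ 1)·d`. -/
noncomputable def leveltMap :
    (K ⊗[C] (constantsE C K R ι dK dR)) →ₐ[C] K ⊗[C] R :=
  Algebra.TensorProduct.productMap
    (Algebra.TensorProduct.includeLeft : K →ₐ[C] K ⊗[C] R)
    (constantsE C K R ι dK dR).val

end LeveltMap


/-! ### Auxiliary lemmas -/

section Wronskian
variable {C K : Type} [Field C] [Field K] [Algebra C K]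
variable {V : Type} [AddCommGroup V] [Module C V]

lemma repr_rTensor {β : Type} (δ : Derivation C K K) (b : Module.Basis β C V) (x : K ⊗[C] V) (j : β) :
    (Algebra.TensorProduct.basis K b).repr (LinearMap.rTensor V δ.toLinearMap x) j
      = δ ((Algebra.TensorProduct.basis K b).repr x j) := by
  induction x using TensorProduct.induction_on with
  | zero => simp
  | tmul a v =>
      rw [LinearMap.rTensor_tmul]
      simp only [Algebra.TensorProduct.basis_repr_tmul, Finsupp.smul_apply, smul_eq_mul,
        Finsupp.mapRange_apply, Derivation.coeFn_coe]
      rw [Derivation.leibniz, Derivation.map_algebraMap]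
      simp [mul_comm]
  | add x y hx hy => simp [map_add, hx, hy]

theorem wronskian_span {ι : Type} (δ : ι → Derivation C K K)
    (hconst : ∀ x : K, (∀ i, δ i x = 0) → ∃ c : C, algebraMap C K c = x)
    (M : Submodule K (K ⊗[C] V))
    (hM : ∀ i, ∀ x ∈ M, LinearMap.rTensor V (δ i).toLinearMap x ∈ M) :
    (M : Set (K ⊗[C] V)) ⊆
      (Submodule.span K ((fun v => (1:K) ⊗ₜ[C] v) '' {v : V | (1:K) ⊗ₜ[C] v ∈ M}) :
        Submodule K (K ⊗[C] V)) := by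
  classical
  -- the submodule of constants
  set W : Submodule C V :=
    { carrier := {v : V | (1:K) ⊗ₜ[C] v ∈ M}
      add_mem' := by
        intro a b ha hb
        simpa [TensorProduct.tmul_add] using M.add_mem ha hb
      zero_mem' := by simp
      smul_mem' := by
        intro c v hv
        show (1:K) ⊗ₜ[C] (c • v) ∈ M
        have : (1:K) ⊗ₜ[C] (c • v) = algebraMap C K c • ((1:K) ⊗ₜ[C] v) := by
          rw [algebraMap_smul, TensorProduct.tmul_smul]
        rw [this]
        exact M.smul_mem _ hv } with hWdef
  have hWmem : ∀ v : V, v ∈ W ↔ (1:K) ⊗ₜ[C] v ∈ M := fun v => Iff.rfl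
  set N : Submodule K (K ⊗[C] V) :=
    Submodule.span K ((fun v => (1:K) ⊗ₜ[C] v) '' {v : V | (1:K) ⊗ₜ[C] v ∈ M}) with hN
  set Q := V ⧸ W with hQ
  set π : V →ₗ[C] Q := W.mkQ with hπ
  have hexact : Function.Exact (LinearMap.lTensor K W.subtype) (LinearMap.lTensor K π) :=
    Module.Flat.lTensor_exact K (LinearMap.exact_subtype_mkQ W)
  set M' : Submodule K (K ⊗[C] Q) := Submodule.map (π.baseChange K) M with hM'
  have hrange_le_M : ∀ y : K ⊗[C] W, LinearMap.lTensor K W.subtype y ∈ M := by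
    intro y
    induction y using TensorProduct.induction_on with
    | zero => simp
    | tmul k w =>
        rw [LinearMap.lTensor_tmul]
        have : k ⊗ₜ[C] (W.subtype w) = k • ((1:K) ⊗ₜ[C] (w : V)) := by
          rw [TensorProduct.smul_tmul', smul_eq_mul, mul_one]; rfl
        rw [this]
        exact M.smul_mem _ w.2
    | add x y hx hy => rw [map_add]; exact M.add_mem hx hy
  have hrange_le_N : ∀ y : K ⊗[C] W, LinearMap.lTensor K W.subtype y ∈ N := by
    intro y
    induction y using TensorProduct.induction_on with
    | zero => simp
    | tmul k w =>
        rw [LinearMap.lTensor_tmul]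
        have : k ⊗ₜ[C] (W.subtype w) = k • ((1:K) ⊗ₜ[C] (w : V)) := by
          rw [TensorProduct.smul_tmul', smul_eq_mul, mul_one]; rfl
        rw [this]
        exact N.smul_mem _ (Submodule.subset_span ⟨(w : V), w.2, rfl⟩)
    | add x y hx hy => rw [map_add]; exact N.add_mem hx hy
  have hbc : ∀ z : K ⊗[C] V, π.baseChange K z = LinearMap.lTensor K π z := by
    intro z; rw [LinearMap.baseChange_eq_ltensor]
  have hM'stab : ∀ i, ∀ y ∈ M', LinearMap.rTensor Q (δ i).toLinearMap y ∈ M' := by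
    intro i y hy
    obtain ⟨x, hx, rfl⟩ := hy
    refine ⟨LinearMap.rTensor V (δ i).toLinearMap x, hM i x hx, ?_⟩
    have key : ∀ z : K ⊗[C] V, (π.baseChange K) (LinearMap.rTensor V (δ i).toLinearMap z)
        = LinearMap.rTensor Q (δ i).toLinearMap ((π.baseChange K) z) := by
      intro z
      induction z using TensorProduct.induction_on with
      | zero => simp
      | tmul a v => simp
      | add u v hu hv => simp only [map_add, hu, hv]
    exact key x
  have hM'bot : M' = ⊥ := by
    by_contra hne
    obtain ⟨y₀, hy₀M, hy₀ne⟩ := Submodule.exists_mem_ne_zero_of_ne_bot hne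
    set b : Module.Basis (Module.Basis.ofVectorSpaceIndex C Q) C Q := Module.Basis.ofVectorSpace C Q with hb
    set bK := Algebra.TensorProduct.basis K b with hbK
    set S : Set ℕ := {n | ∃ y ∈ M', y ≠ 0 ∧ (bK.repr y).support.card = n} with hS
    have hSne : S.Nonempty := ⟨_, y₀, hy₀M, hy₀ne, rfl⟩
    obtain ⟨y, hyM, hyne, hycard⟩ := Nat.sInf_mem hSne
    have hsupp : (bK.repr y).support.Nonempty := by
      rw [Finsupp.support_nonempty_iff]
      simpa using hyne
    obtain ⟨j₀, hj₀⟩ := hsupp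
    have hcoeff : bK.repr y j₀ ≠ 0 := Finsupp.mem_support_iff.mp hj₀
    set a : K := (bK.repr y j₀)⁻¹ with ha
    have hane : a ≠ 0 := inv_ne_zero hcoeff
    set y' := a • y with hy'
    have hy'M : y' ∈ M' := M'.smul_mem _ hyM
    have hy'supp : (bK.repr y').support = (bK.repr y).support := by
      rw [hy', map_smul]
      exact Finsupp.support_smul_eq hane
    have hy'coeff : bK.repr y' j₀ = 1 := by
      rw [hy', map_smul, Finsupp.smul_apply, smul_eq_mul, ha, inv_mul_cancel₀ hcoeff]
    have hy'ne : y' ≠ 0 := by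
      intro h
      rw [h, map_zero] at hy'coeff
      simp at hy'coeff
    -- each derivation kills y'
    have hder : ∀ i j, δ i (bK.repr y' j) = 0 := by
      intro i j
      by_contra hz0
      set z := LinearMap.rTensor Q (δ i).toLinearMap y' with hzdef
      have hzM : z ∈ M' := hM'stab i y' hy'M
      have hzrepr : ∀ j', bK.repr z j' = δ i (bK.repr y' j') := fun j' => repr_rTensor _ b y' j'
      have hzne : z ≠ 0 := by
        intro h0
        apply hz0
        rw [← hzrepr j, h0, map_zero]
        rfl
      have hsub : (bK.repr z).support ⊂ (bK.repr y').support := by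
        constructor
        · intro j' hj'
          rw [Finsupp.mem_support_iff] at hj' ⊢
          intro h0
          exact hj' (by rw [hzrepr j', h0, map_zero])
        · intro hsub'
          have hj₀' : j₀ ∈ (bK.repr y').support := by rw [hy'supp]; exact hj₀
          have := hsub' hj₀'
          rw [Finsupp.mem_support_iff, hzrepr j₀, hy'coeff] at this
          exact this (Derivation.map_one_eq_zero _)
      have hlt : (bK.repr z).support.card < sInf S := by
        rw [← hycard, ← hy'supp]
        exact Finset.card_lt_card hsub
      exact absurd hlt (Nat.not_lt.mpr (Nat.sInf_le ⟨z, hzM, hzne, rfl⟩))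
    -- so all coefficients are in C, hence y' = 1 ⊗ q
    have hq : ∃ q : Q, y' = (1:K) ⊗ₜ[C] q := by
      have hex : ∀ j, ∃ c : C, algebraMap C K c = bK.repr y' j := fun j =>
        hconst _ (fun i => hder i j)
      choose c hc using hex
      have h2 := Module.Basis.linearCombination_repr bK y'
      rw [Finsupp.linearCombination_apply, Finsupp.sum] at h2
      refine ⟨∑ j ∈ (bK.repr y').support, c j • b j, ?_⟩
      conv_lhs => rw [← h2]
      rw [TensorProduct.tmul_sum]
      refine Finset.sum_congr rfl (fun j hj => ?_)
      rw [← hc j, hbK, Algebra.TensorProduct.basis_apply, TensorProduct.tmul_smul,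
        algebraMap_smul]
    obtain ⟨q, hqe⟩ := hq
    obtain ⟨x, hxM, hxeq⟩ := hy'M
    obtain ⟨v, hv⟩ := W.mkQ_surjective q
    have hker : LinearMap.lTensor K π (x - (1:K) ⊗ₜ[C] v) = 0 := by
      rw [map_sub, ← hbc, hxeq, hqe, LinearMap.lTensor_tmul]
      have hπv : π v = q := hv
      rw [hπv, sub_self]
    obtain ⟨t, ht⟩ := (hexact _).mp hker
    have hxv : x - (1:K) ⊗ₜ[C] v ∈ M := ht ▸ hrange_le_M t
    have h1v : (1:K) ⊗ₜ[C] v ∈ M := by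
      have := M.sub_mem hxM hxv
      simpa using this
    have hvW : v ∈ W := h1v
    have hq0 : q = 0 := by
      rw [← hv, Submodule.mkQ_apply]
      exact (Submodule.Quotient.mk_eq_zero _).mpr hvW
    apply hy'ne
    rw [hqe, hq0, TensorProduct.tmul_zero]
  -- conclusion
  intro x hx
  have hmem : π.baseChange K x ∈ M' := ⟨x, hx, rfl⟩
  rw [hM'bot] at hmem
  have hx0 : LinearMap.lTensor K π x = 0 := by
    rw [← hbc]
    simpa using hmem
  obtain ⟨t, ht⟩ := (hexact x).mp hx0
  exact ht ▸ hrange_le_N t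

end Wronskian

section RadDiff

lemma nat_smul_mem_ideal {A : Type} [CommRing A] (C : Type) [Field C] [CharZero C] [Algebra C A]
    (I : Ideal A) {m : ℕ} (hm : m ≠ 0) {a : A} (h : m • a ∈ I) : a ∈ I := by
  have hC : (m : C) ≠ 0 := Nat.cast_ne_zero.mpr hm
  have : a = algebraMap C A ((m : C)⁻¹) * (m • a) := by
    rw [nsmul_eq_mul, ← map_natCast (algebraMap C A) m, ← mul_assoc, ← map_mul,
      inv_mul_cancel₀ hC, map_one, one_mul]
  rw [this]
  exact Ideal.mul_mem_left _ _ h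

lemma radical_differential {A : Type} [CommRing A] (C : Type) [Field C] [CharZero C] [Algebra C A]
    (D : Derivation C A A) (I : Ideal A) (hI : ∀ x ∈ I, D x ∈ I) :
    ∀ x ∈ I.radical, D x ∈ I.radical := by
  intro x hx
  obtain ⟨n, hn⟩ := hx
  match n, hn with
  | 0, hn =>
    rw [pow_zero] at hn
    have htop : I = ⊤ := (Ideal.eq_top_iff_one I).mpr hn
    exact Ideal.le_radical (by rw [htop]; trivial)
  | (n+1), hn =>
    set w := D x with hw
    have claim : ∀ m, m ≤ n → x ^ (n - m) * w ^ (2*m+1) ∈ I := by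
      intro m
      induction m with
      | zero =>
        intro _
        have h0 : D (x ^ (n+1)) ∈ I := hI _ hn
        rw [Derivation.leibniz_pow] at h0
        simp only [Nat.add_sub_cancel, smul_eq_mul, ← hw] at h0
        exact_mod_cast by simpa using nat_smul_mem_ideal C I (Nat.succ_ne_zero n) h0
      | succ m ih =>
        intro hm1
        have hy : x ^ (n - m) * w ^ (2*m+1) ∈ I := ih (Nat.le_of_succ_le hm1)
        have hDy : D (x ^ (n - m) * w ^ (2*m+1)) ∈ I := hI _ hy
        have hj : n - m = (n - (m+1)) + 1 := by omega
        have key : (n - m) • (x ^ (n - (m+1)) * w ^ (2*(m+1)+1))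
            = w * D (x ^ (n - m) * w ^ (2*m+1))
              - (2*m+1) • ((x ^ (n - m) * w ^ (2*m+1)) * D w) := by
          rw [Derivation.leibniz, Derivation.leibniz_pow, Derivation.leibniz_pow, ← hw, hj]
          simp only [Nat.add_sub_cancel, smul_eq_mul, nsmul_eq_mul]
          push_cast
          ring
        have hmem : (n - m) • (x ^ (n - (m+1)) * w ^ (2*(m+1)+1)) ∈ I := by
          rw [key]
          exact Ideal.sub_mem I (Ideal.mul_mem_left _ _ hDy)
            (nsmul_mem (Ideal.mul_mem_right _ _ hy) _)
        exact nat_smul_mem_ideal C I (by omega) hmem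
    have := claim n le_rfl
    rw [Nat.sub_self, pow_zero, one_mul] at this
    exact ⟨2*n+1, this⟩

end RadDiff

lemma one_tmul_eq_zero {C K M : Type} [Field C] [Field K] [Algebra C K]
    [AddCommGroup M] [Module C M] {m : M} (h : (1:K) ⊗ₜ[C] m = 0) : m = 0 := by
  have h1 : LinearIndepOn C id ({1} : Set K) :=
    .singleton one_ne_zero
  let b := Module.Basis.extend h1
  have hmem : (1:K) ∈ h1.extend (Set.subset_univ _) := h1.subset_extend _ rfl
  let i : h1.extend (Set.subset_univ _) := ⟨1, hmem⟩
  let ℓ : K →ₗ[C] C := b.coord i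
  have hℓ1 : ℓ 1 = 1 := by
    have : b i = (1:K) := Module.Basis.extend_apply_self h1 i
    rw [show (1:K) = b i from this.symm]
    simp [ℓ, Module.Basis.coord_apply, Module.Basis.repr_self]
  let L : K ⊗[C] M →ₗ[C] M := (TensorProduct.lid C M).toLinearMap ∘ₗ LinearMap.rTensor M ℓ
  have : m = L ((1:K) ⊗ₜ[C] m) := by
    simp [L, LinearMap.rTensor_tmul, hℓ1]
  rw [this, h, map_zero]

lemma span_differential {C A : Type} [CommSemiring C] [CommRing A] [Algebra C A]
    (D : Derivation C A A) (S : Set A) (hS : ∀ s ∈ S, D s ∈ Ideal.span S) :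
    ∀ x ∈ Ideal.span S, D x ∈ Ideal.span S := by
  intro x hx
  refine Submodule.span_induction (p := fun x _ => D x ∈ Ideal.span S) ?_ ?_ ?_ ?_ hx
  · exact hS
  · simp
  · intro a b _ _ ha hb
    rw [map_add]; exact Ideal.add_mem _ ha hb
  · intro a x hx hDx
    rw [smul_eq_mul, Derivation.leibniz, smul_eq_mul, smul_eq_mul]
    exact Ideal.add_mem _ (Ideal.mul_mem_left _ _ hDx)
      (Ideal.mul_mem_right _ _ hx)

lemma tensorDer_apply_tmul (C K R : Type) [Field C] [Field K] [Algebra C K] [CommRing R]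
    [Algebra C R] (dK : Derivation C K K) (dR : Derivation C R R) (a : K) (b : R) :
    tensorDer C K R dK dR (a ⊗ₜ[C] b) = dK a ⊗ₜ b + a ⊗ₜ dR b := by
  show tensorDerMap C K R dK dR (a ⊗ₜ b) = _
  exact tensorDerMap_tmul C K R dK dR a b

set_option maxHeartbeats 10000000
set_option synthInstance.maxHeartbeats 4000000
/-- In the setting of Levelt's map (with `K` differentially finitely generated
over `C`): if `φ : K ⊗[C] E → K ⊗[C] R`, `φ(a ⊗ d) = (a ⊗ 1)·d`, is an isomorphism, then the
differential ring `K ⊗[C] R` is almost constant, i.e., sending a radical ideal `𝔞` of `E` to the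
radical differential ideal of `K ⊗[C] R` it generates is a bijection between the set of radical
ideals of `E` and the set of radical differential ideals of `K ⊗[C] R`. -/
theorem almostConstant_of_leveltMap_bijective
    (C R K : Type) [Field C] [IsAlgClosed C] [CharZero C]
    [CommRing R] [IsDomain R] [Algebra C R]
    [Field K] [Algebra C K] [Algebra R K] [IsScalarTower C R K] [IsFractionRing R K]
    (ι : Type) [Fintype ι]
    (δR : ι → Derivation C R R) (δK : ι → Derivation C K K)
    (hcomm : ∀ i j : ι, ∀ x : K, δK i (δK j x) = δK j (δK i x))
    (hext : ∀ i : ι, ∀ r : R, δK i (algebraMap R K r) = algebraMap R K (δR i r))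
    (hconst : ∀ x : K, (∀ i, δK i x = 0) → ∃ c : C, algebraMap C K c = x)
    (hfg : ∃ s : Finset K, ∀ L : Subfield K, (∀ c : C, algebraMap C K c ∈ L) →
      (↑s : Set K) ⊆ L → (∀ i : ι, ∀ x ∈ L, δK i x ∈ L) → L = ⊤)
    (hφ : Function.Bijective (leveltMap C K R ι δK δR)) :
    Set.BijOn
      (fun 𝔞 : Ideal (constantsE C K R ι δK δR) =>
        (Ideal.map (constantsE C K R ι δK δR).val 𝔞).radical)
      {𝔞 : Ideal (constantsE C K R ι δK δR) | 𝔞.IsRadical}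
      {𝔟 : Ideal (K ⊗[C] R) | 𝔟.IsRadical ∧
        ∀ i : ι, ∀ x ∈ 𝔟, tensorDer C K R (δK i) (δR i) x ∈ 𝔟} := by
  classical
  set E := constantsE C K R ι δK δR with hE
  set φ := leveltMap C K R ι δK δR with hφdef
  set incl : ↥E →ₐ[C] K ⊗[C] ↥E := Algebra.TensorProduct.includeRight with hincl
  have hφbij : Function.Bijective ⇑φ := hφ
  have hφ2 : ∀ d : ↥E, φ ((1:K) ⊗ₜ[C] d) = (d : K ⊗[C] R) := by
    intro d
    simp only [hφdef, leveltMap, Algebra.TensorProduct.productMap_apply_tmul,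
      Algebra.TensorProduct.includeLeft_apply, Subalgebra.coe_val]
    rw [← Algebra.TensorProduct.one_def, one_mul]
  have hDconst : ∀ (d : ↥E) i, tensorDer C K R (δK i) (δR i) (d : K ⊗[C] R) = 0 :=
    fun d i => d.2 i
  -- the Levelt map is differential
  have hF3 : ∀ i (x : K ⊗[C] ↥E),
      tensorDer C K R (δK i) (δR i) (φ x) = φ (LinearMap.rTensor ↥E (δK i).toLinearMap x) := by
    intro i x
    induction x using TensorProduct.induction_on with
    | zero => simp
    | tmul a d =>
        rw [LinearMap.rTensor_tmul]
        simp only [Derivation.coeFn_coe]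
        have h1 : φ (a ⊗ₜ[C] d) = (a ⊗ₜ[C] (1:R)) * (d : K ⊗[C] R) := by
          simp [hφdef, leveltMap]
        have h2 : φ ((δK i a) ⊗ₜ[C] d) = ((δK i a) ⊗ₜ[C] (1:R)) * (d : K ⊗[C] R) := by
          simp [hφdef, leveltMap]
        have h3 : tensorDer C K R (δK i) (δR i) (a ⊗ₜ[C] (1:R)) = (δK i a) ⊗ₜ[C] (1:R) := by
          rw [tensorDer_apply_tmul]
          simp
        rw [h1, h2, Derivation.leibniz, hDconst d i, smul_zero, zero_add, smul_eq_mul, h3,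
          mul_comm]
    | add u v hu hv =>
        simp only [map_add, hu, hv]
  -- transfer of ideal generation through φ
  have hF4 : ∀ 𝔞 : Ideal ↥E,
      Ideal.map (Subalgebra.val E) 𝔞 = Ideal.map φ (Ideal.map incl 𝔞) := by
    intro 𝔞
    apply le_antisymm
    · rw [Ideal.map_le_iff_le_comap]
      intro a ha
      have h1 : φ (incl a) ∈ Ideal.map φ (Ideal.map incl 𝔞) :=
        Ideal.mem_map_of_mem φ (Ideal.mem_map_of_mem incl ha)
      have h2 : φ (incl a) = E.val a := hφ2 a
      rw [Ideal.mem_comap]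
      rwa [h2] at h1
    · have hstep : Ideal.map incl 𝔞 ≤ Ideal.comap φ (Ideal.map (Subalgebra.val E) 𝔞) := by
        rw [Ideal.map_le_iff_le_comap]
        intro a ha
        rw [Ideal.mem_comap, Ideal.mem_comap]
        rw [show φ (incl a) = E.val a from hφ2 a]
        exact Ideal.mem_map_of_mem _ ha
      rw [Ideal.map_le_iff_le_comap]
      exact hstep
  -- f maps radical ideals to radical differential ideals
  have hMapsTo_f : Set.MapsTo
      (fun 𝔞 : Ideal ↥E => (Ideal.map E.val 𝔞).radical)
      {𝔞 : Ideal ↥E | 𝔞.IsRadical}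
      {𝔟 : Ideal (K ⊗[C] R) | 𝔟.IsRadical ∧
        ∀ i : ι, ∀ x ∈ 𝔟, tensorDer C K R (δK i) (δR i) x ∈ 𝔟} := by
    intro 𝔞 _
    refine ⟨Ideal.radical_isRadical _, ?_⟩
    intro i x hx
    have hmapspan : Ideal.map (Subalgebra.val E) 𝔞 = Ideal.span (E.val '' 𝔞) := rfl
    have hdiff : ∀ z ∈ Ideal.map (Subalgebra.val E) 𝔞,
        tensorDer C K R (δK i) (δR i) z ∈ Ideal.map (Subalgebra.val E) 𝔞 := by
      rw [hmapspan]
      refine span_differential _ _ ?_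
      rintro _ ⟨e, he, rfl⟩
      rw [show tensorDer C K R (δK i) (δR i) (E.val e) = 0 from hDconst e i]
      exact Submodule.zero_mem _
    exact radical_differential C (tensorDer C K R (δK i) (δR i)) _ hdiff x hx
  have hMapsTo_g : Set.MapsTo
      (fun 𝔟 : Ideal (K ⊗[C] R) => Ideal.comap E.val 𝔟)
      {𝔟 : Ideal (K ⊗[C] R) | 𝔟.IsRadical ∧
        ∀ i : ι, ∀ x ∈ 𝔟, tensorDer C K R (δK i) (δR i) x ∈ 𝔟}
      {𝔞 : Ideal ↥E | 𝔞.IsRadical} := by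
    intro 𝔟 h𝔟
    exact h𝔟.1.comap _
  -- left inverse
  have hLeft : ∀ 𝔞 : Ideal ↥E, 𝔞.IsRadical →
      Ideal.comap E.val ((Ideal.map E.val 𝔞).radical) = 𝔞 := by
    intro 𝔞 h𝔞
    apply le_antisymm
    · intro e he
      rw [Ideal.mem_comap] at he
      obtain ⟨n, hn⟩ := he
      rw [hF4] at hn
      rw [show ((E.val e)^n) = φ ((1:K) ⊗ₜ[C] (e^n)) from by
        rw [hφ2 (e^n)]; exact (map_pow E.val e n).symm] at hn
      have h1 : (1:K) ⊗ₜ[C] (e^n) ∈ Ideal.comap φ (Ideal.map φ (Ideal.map incl 𝔞)) :=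
        Ideal.mem_comap.mpr hn
      rw [Ideal.comap_map_of_bijective φ hφbij] at h1
      -- kill e^n modulo 𝔞 using a module quotient
      set 𝔞C : Submodule C ↥E := Submodule.restrictScalars C 𝔞 with h𝔞C
      set πq : ↥E →ₗ[C] (↥E ⧸ 𝔞C) := 𝔞C.mkQ with hπq
      set P : Submodule K (K ⊗[C] ↥E) :=
        Submodule.span K ((fun a : ↥E => (1:K) ⊗ₜ[C] a) '' 𝔞) with hP
      have hmul : ∀ (x : K ⊗[C] ↥E), ∀ z ∈ P, x * z ∈ P := by
        intro x
        induction x using TensorProduct.induction_on with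
        | zero => intro z hz; rw [zero_mul]; exact P.zero_mem
        | tmul k ee =>
            intro z hz
            refine Submodule.span_induction ?_ ?_ ?_ ?_ hz
            · rintro _ ⟨a, ha, rfl⟩
              have hmem : ee * a ∈ 𝔞 := Ideal.mul_mem_left 𝔞 ee ha
              have heq : (k ⊗ₜ[C] ee) * ((1:K) ⊗ₜ[C] a) = k • ((1:K) ⊗ₜ[C] (ee * a)) := by
                rw [Algebra.TensorProduct.tmul_mul_tmul, TensorProduct.smul_tmul', smul_eq_mul,
                  mul_one]
              rw [heq]
              exact P.smul_mem _ (Submodule.subset_span ⟨ee * a, hmem, rfl⟩)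
            · rw [mul_zero]; exact P.zero_mem
            · intro u v _ _ hu hv
              rw [mul_add]; exact P.add_mem hu hv
            · intro c u _ hu
              rw [mul_smul_comm]; exact P.smul_mem _ hu
        | add u v hu hv =>
            intro z hz
            rw [add_mul]; exact P.add_mem (hu z hz) (hv z hz)
      have hPideal : ∀ z ∈ Ideal.map incl 𝔞, z ∈ P := by
        intro z hz
        refine Submodule.span_induction ?_ ?_ ?_ ?_ hz
        · rintro _ ⟨a, ha, rfl⟩
          exact Submodule.subset_span ⟨a, ha, rfl⟩
        · exact P.zero_mem
        · intro u v _ _ hu hv; exact P.add_mem hu hv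
        · intro x u _ hu
          exact hmul x u hu
      have h1P : (1:K) ⊗ₜ[C] (e^n) ∈ P := hPideal _ h1
      have hker : P ≤ LinearMap.ker (πq.baseChange K) := by
        rw [Submodule.span_le]
        rintro _ ⟨a, ha, rfl⟩
        rw [SetLike.mem_coe, LinearMap.mem_ker, LinearMap.baseChange_tmul]
        rw [show πq a = 0 from (Submodule.Quotient.mk_eq_zero 𝔞C).mpr ha]
        rw [TensorProduct.tmul_zero]
      have h2 : (1:K) ⊗ₜ[C] (πq (e^n)) = 0 := by
        have := hker h1P
        rw [LinearMap.mem_ker, LinearMap.baseChange_tmul] at this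
        exact this
      have h4 : πq (e^n) = 0 := one_tmul_eq_zero (K := K) h2
      have h5 : e^n ∈ 𝔞 := (Submodule.Quotient.mk_eq_zero 𝔞C).mp h4
      exact h𝔞 ⟨n, h5⟩
    · intro e he
      exact Ideal.mem_comap.mpr (Ideal.le_radical (Ideal.mem_map_of_mem _ he))
  -- right inverse
  have hRight : ∀ 𝔟 : Ideal (K ⊗[C] R), 𝔟.IsRadical →
      (∀ i : ι, ∀ x ∈ 𝔟, tensorDer C K R (δK i) (δR i) x ∈ 𝔟) →
      (Ideal.map E.val (Ideal.comap E.val 𝔟)).radical = 𝔟 := by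
    intro 𝔟 h𝔟rad h𝔟diff
    have hle : Ideal.map E.val (Ideal.comap E.val 𝔟) ≤ 𝔟 := Ideal.map_comap_le
    apply le_antisymm
    · exact h𝔟rad.radical_le_iff.mpr hle
    · set 𝔞' := Ideal.comap (Subalgebra.val E) 𝔟 with h𝔞'
      set J : Ideal (K ⊗[C] ↥E) := Ideal.comap φ 𝔟 with hJ
      set M : Submodule K (K ⊗[C] ↥E) := Submodule.restrictScalars K J with hMdef
      have hMstab : ∀ i, ∀ x ∈ M, LinearMap.rTensor ↥E (δK i).toLinearMap x ∈ M := by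
        intro i x hx
        have hx' : φ x ∈ 𝔟 := hx
        have hd := h𝔟diff i (φ x) hx'
        rw [hF3 i x] at hd
        exact hd
      have hwr := wronskian_span δK hconst M hMstab
      intro x hx
      obtain ⟨y, rfl⟩ := hφbij.2 x
      have hyM : y ∈ M := by show φ y ∈ 𝔟; exact hx
      have hyspan := hwr hyM
      have hle2 : Submodule.span K ((fun v => (1:K) ⊗ₜ[C] v) '' {d : ↥E | (1:K) ⊗ₜ[C] d ∈ M})
          ≤ Submodule.restrictScalars K (Ideal.map incl 𝔞' : Ideal (K ⊗[C] ↥E)) := by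
        rw [Submodule.span_le]
        rintro _ ⟨d, hd, rfl⟩
        have hd𝔟 : (d : K ⊗[C] R) ∈ 𝔟 := by rw [← hφ2 d]; exact hd
        exact Ideal.mem_map_of_mem incl (show d ∈ 𝔞' from hd𝔟)
      have hy2 : y ∈ Ideal.map incl 𝔞' := hle2 hyspan
      have hy3 : φ y ∈ Ideal.map φ (Ideal.map incl 𝔞') := Ideal.mem_map_of_mem φ hy2
      rw [← hF4 𝔞'] at hy3
      exact Ideal.le_radical hy3
  exact Set.InvOn.bijOn
    ⟨fun 𝔞 h𝔞 => hLeft 𝔞 h𝔞, fun 𝔟 h𝔟 => hRight 𝔟 h𝔟.1 h𝔟.2⟩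
    hMapsTo_f hMapsTo_g
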